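/- The function t ↦ η^N_t is differentiable on (−∞, T] and solves the Riccati equation (d/dt)η^N_t = 2(a+q)η^N_t + (1 − 1/N²)(η^N_t)² − (ε − q²) for every t ≤ T, together with the terminal condition η^N_T = c. -/

import Mathlib

set_option maxHeartbeats 1600000
set_option maxRecDepth 8000


/-- The explicit solution `η` of the scalar Riccati equation, as a function of the
parameters `a, q, ε, c`, the horizon `T`, the coefficient `r` (which equals
`1 - 1/N²` for the `N`-player game) and the time `t`. -/
noncomputable def etaAux (a q ε c T r t : ℝ) : ℝ :=
  let R := (a + q) ^ 2 + r * (ε - q ^ 2)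
  let dp := -(a + q) + Real.sqrt R
  let dm := -(a + q) - Real.sqrt R
  let e := Real.exp ((dp - dm) * (T - t))
  (-(ε - q ^ 2) * (e - 1) - c * (dp * e - dm)) / ((dm * e - dp) - c * r * (e - 1))

theorem riccati_key (T a q ε c r : ℝ)
    (ha : 0 ≤ a + q) (hc : 0 ≤ c) (hr : 0 ≤ r)
    (hR : 0 < (a + q) ^ 2 + r * (ε - q ^ 2)) :
    DifferentiableOn ℝ (etaAux a q ε c T r) (Set.Iic T) ∧
    (∀ t ≤ T, HasDerivAt (etaAux a q ε c T r)
      (2 * (a + q) * etaAux a q ε c T r t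
        + r * (etaAux a q ε c T r t) ^ 2
        - (ε - q ^ 2)) t) ∧
    etaAux a q ε c T r T = c := by
  set k := ε - q ^ 2 with hk
  set P := a + q with hP
  set s := Real.sqrt (P ^ 2 + r * k) with hsdef
  have hs2 : s ^ 2 = P ^ 2 + r * k := Real.sq_sqrt hR.le
  have hspos : 0 < s := Real.sqrt_pos.mpr hR
  set dp := -P + s with hdp
  set dm := -P - s with hdm
  set E : ℝ → ℝ := fun u => Real.exp ((dp - dm) * (T - u)) with hE
  set Nf : ℝ → ℝ := fun u => -k * (E u - 1) - c * (dp * E u - dm) with hNf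
  set Df : ℝ → ℝ := fun u => (dm * E u - dp) - c * r * (E u - 1) with hDf
  have heta : etaAux a q ε c T r = fun u => Nf u / Df u := rfl
  clear_value Nf Df E dm dp s P k
  have hEpos : ∀ u, 0 < E u := by intro u; rw [hE]; exact Real.exp_pos _
  have hEone : ∀ u ≤ T, 1 ≤ E u := by
    intro u hu
    have : (0:ℝ) ≤ (dp - dm) * (T - u) := by
      apply mul_nonneg
      · simp [hdp, hdm]; nlinarith
      · linarith
    simpa [hE] using Real.one_le_exp this
  have hD0 : ∀ u ≤ T, Df u ≠ 0 := by
    intro u hu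
    have h1 : 1 ≤ E u := hEone u hu
    have hcr : 0 ≤ c * r := mul_nonneg hc hr
    have : Df u < 0 := by
      simp only [hDf, hdm, hdp]
      nlinarith [mul_nonneg (sub_nonneg.mpr h1) hcr, mul_nonneg (sub_nonneg.mpr h1) (add_nonneg ha hspos.le)]
    exact this.ne
  have hEderiv : ∀ t : ℝ, HasDerivAt E (-(dp - dm) * E t) t := by
    intro t
    have h : HasDerivAt (fun u : ℝ => (dp - dm) * (T - u)) (-(dp - dm)) t := by
      have := ((hasDerivAt_const t T).sub (hasDerivAt_id t)).const_mul (dp - dm)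
      simpa using this
    have := h.exp
    simpa [hE, mul_comm] using this
  have hmain : ∀ t ≤ T, HasDerivAt (etaAux a q ε c T r)
      (2 * P * etaAux a q ε c T r t + r * (etaAux a q ε c T r t) ^ 2 - k) t := by
    intro t ht
    have hEd := hEderiv t
    have hNd : HasDerivAt Nf (-k * (-(dp - dm) * E t) - c * (dp * (-(dp - dm) * E t))) t := by
      have h1 : HasDerivAt (fun u => -k * (E u - 1)) (-k * (-(dp - dm) * E t)) t :=
        (hEd.sub_const 1).const_mul (-k)
      have h2 : HasDerivAt (fun u => c * (dp * E u - dm)) (c * (dp * (-(dp - dm) * E t))) t :=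
        ((hEd.const_mul dp).sub_const dm).const_mul c
      rw [hNf]; exact h1.sub h2
    have hDd : HasDerivAt Df (dm * (-(dp - dm) * E t) - c * r * (-(dp - dm) * E t)) t := by
      have h1 : HasDerivAt (fun u => dm * E u - dp) (dm * (-(dp - dm) * E t)) t :=
        (hEd.const_mul dm).sub_const dp
      have h2 : HasDerivAt (fun u => c * r * (E u - 1)) (c * r * (-(dp - dm) * E t)) t :=
        (hEd.sub_const 1).const_mul (c * r)
      rw [hDf]; exact h1.sub h2
    have hdiv := hNd.div hDd (hD0 t ht)
    rw [heta]
    refine HasDerivAt.congr_deriv hdiv ?_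
    have hD := hD0 t ht
    have expand : 2 * P * (Nf t / Df t) + r * (Nf t / Df t) ^ 2 - k
        = (2 * P * Nf t * Df t + r * Nf t ^ 2 - k * Df t ^ 2) / Df t ^ 2 := by
      field_simp
    rw [expand]
    congr 1
    simp only [hNf, hDf, hdp, hdm]
    linear_combination ((E t - 1) ^ 2 * (k - r * c ^ 2 - 2 * P * c)) * hs2
  refine ⟨fun t ht => (hmain t ht).differentiableAt.differentiableWithinAt, hmain, ?_⟩
  have hET : E T = 1 := by simp [hE]
  rw [heta]
  have hD := hD0 T le_rfl
  rw [div_eq_iff hD]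
  simp only [hNf, hDf, hET]
  ring

/-- The function `t ↦ η^N_t` is differentiable on `(−∞, T]` and solves the Riccati
equation `(d/dt) η^N_t = 2(a+q) η^N_t + (1 − 1/N²) (η^N_t)² − (ε − q²)` for every
`t ≤ T`, with terminal condition `η^N_T = c`. -/
theorem statement_0 (T a q ε c : ℝ) (N : ℕ) (hT : 0 < T) (hN : 1 ≤ N)
    (ha : 0 ≤ a) (hq : 0 ≤ q) (hc : 0 ≤ c) (hε : q ^ 2 ≤ ε)
    (hR : 0 < (a + q) ^ 2 + (1 - 1 / (N : ℝ) ^ 2) * (ε - q ^ 2)) :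
    DifferentiableOn ℝ (etaAux a q ε c T (1 - 1 / (N : ℝ) ^ 2)) (Set.Iic T) ∧
    (∀ t ≤ T, HasDerivAt (etaAux a q ε c T (1 - 1 / (N : ℝ) ^ 2))
      (2 * (a + q) * etaAux a q ε c T (1 - 1 / (N : ℝ) ^ 2) t
        + (1 - 1 / (N : ℝ) ^ 2) * (etaAux a q ε c T (1 - 1 / (N : ℝ) ^ 2) t) ^ 2
        - (ε - q ^ 2)) t) ∧
    etaAux a q ε c T (1 - 1 / (N : ℝ) ^ 2) T = c := by
  have hr : 0 ≤ 1 - 1 / (N : ℝ) ^ 2 := by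
    have : (1:ℝ) ≤ (N : ℝ) := by exact_mod_cast hN
    have h2 : (1:ℝ) ≤ (N : ℝ) ^ 2 := by nlinarith
    have : 1 / (N : ℝ) ^ 2 ≤ 1 := by
      rw [div_le_one (by positivity)]; exact h2
    linarith
  exact riccati_key T a q ε c _ (add_nonneg ha hq) hc hr hR
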